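/- arXiv:0906.1586 — 7 statements merged into one kernel-verified Lean document; each statement's English description precedes it below -/
import Mathlib

section
/- For any vertex x in a connected resistance network, the evaluation functional L_x u := u(x) - u(o) is bounded with respect to the energy norm: |u(x)-u(o)| ≤ k·E(u)^{1/2}, where k² = Σ_{i=1}^n 1/c_{x_{i-1}x_i} for any path (o = x_0, x_1, ..., x_n = x) with positive conductances along edges. -/
open Finset

theorem eval_helper {V : Type*} (c : V → V → ℝ)
    (hsymm : ∀ x y, c x y = c y x) (hnonneg : ∀ x y, 0 ≤ c x y)
    (u : V → ℝ)
    (hfin : Summable (fun p : V × V => c p.1 p.2 * (u p.1 - u p.2) ^ 2)) :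
    ∀ n : ℕ, ∀ p : ℕ → V, (∀ i < n, 0 < c (p i) (p (i+1))) →
    |u (p n) - u (p 0)| ≤ Real.sqrt (∑ i ∈ Finset.range n, 1 / c (p i) (p (i+1))) *
      Real.sqrt ((1/2) * ∑' q : V × V, c q.1 q.2 * (u q.1 - u q.2) ^ 2) := by
  classical
  intro n
  induction n using Nat.strong_induction_on with
  | _ n IH =>
  intro p hpos
  have hterm : ∀ q : V × V, 0 ≤ c q.1 q.2 * (u q.1 - u q.2) ^ 2 := fun q =>
    mul_nonneg (hnonneg _ _) (sq_nonneg _)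
  set E : ℝ := (1/2) * ∑' q : V × V, c q.1 q.2 * (u q.1 - u q.2) ^ 2 with hEdef
  by_cases hinj : ∀ i ≤ n, ∀ j ≤ n, p i = p j → i = j
  · -- injective case
    set A := ∑ i ∈ range n, 1 / c (p i) (p (i+1)) with hA
    set B := ∑ k ∈ range n, c (p k) (p (k+1)) * (u (p k) - u (p (k+1)))^2 with hB
    have hA0 : 0 ≤ A := Finset.sum_nonneg fun i _ => one_div_nonneg.mpr (hnonneg _ _)
    have hB0 : 0 ≤ B := Finset.sum_nonneg fun i _ => hterm (p i, p (i+1))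
    have hstep : B ≤ E := by
      set F : V × V → ℝ := fun q => c q.1 q.2 * (u q.1 - u q.2) ^ 2 with hF
      set S1 : Finset (V × V) := (range n).image (fun k => (p k, p (k+1))) with hS1
      set S2 : Finset (V × V) := (range n).image (fun k => (p (k+1), p k)) with hS2
      have hinj1 : ∀ a ∈ range n, ∀ b ∈ range n,
          (p a, p (a+1)) = (p b, p (b+1)) → a = b := by
        intro a ha b hb h
        rw [Prod.mk.injEq] at h
        exact hinj a (le_of_lt (mem_range.mp ha)) b (le_of_lt (mem_range.mp hb)) h.1
      have hinj2 : ∀ a ∈ range n, ∀ b ∈ range n,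
          (p (a+1), p a) = (p (b+1), p b) → a = b := by
        intro a ha b hb h
        rw [Prod.mk.injEq] at h
        exact hinj a (le_of_lt (mem_range.mp ha)) b (le_of_lt (mem_range.mp hb)) h.2
      have hdisj : Disjoint S1 S2 := by
        rw [Finset.disjoint_left]
        intro q hq1 hq2
        rw [hS1, mem_image] at hq1
        rw [hS2, mem_image] at hq2
        obtain ⟨a, ha, hqa⟩ := hq1
        obtain ⟨b, hb, hqb⟩ := hq2
        rw [← hqb, Prod.mk.injEq] at hqa
        have h1 : a = b + 1 := hinj a (le_of_lt (mem_range.mp ha))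
          (b+1) (mem_range.mp hb) hqa.1
        have h2 : a + 1 = b := hinj (a+1) (mem_range.mp ha)
          b (le_of_lt (mem_range.mp hb)) hqa.2
        omega
      have hsum1 : ∑ q ∈ S1, F q = B := by
        rw [hS1, Finset.sum_image hinj1]
      have hsum2 : ∑ q ∈ S2, F q = B := by
        rw [hS2, Finset.sum_image hinj2]
        apply Finset.sum_congr rfl
        intro k _
        simp only [hF]
        rw [hsymm]
        ring
      have h2B : 2 * B = ∑ q ∈ S1 ∪ S2, F q := by
        rw [Finset.sum_union hdisj, hsum1, hsum2]; ring
      have hle : ∑ q ∈ S1 ∪ S2, F q ≤ ∑' q : V × V, F q :=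
        Summable.sum_le_tsum _ (fun q _ => hterm q) hfin
      rw [hEdef]
      linarith [h2B ▸ hle]
    have htel : u (p n) - u (p 0) = ∑ k ∈ range n, (u (p (k+1)) - u (p k)) :=
      (Finset.sum_range_sub (fun k => u (p k)) n).symm
    have habs : |u (p n) - u (p 0)| ≤ ∑ k ∈ range n, |u (p (k+1)) - u (p k)| := by
      rw [htel]; exact Finset.abs_sum_le_sum_abs _ _
    have hcs : (∑ k ∈ range n, |u (p (k+1)) - u (p k)|) ^ 2 ≤ A * B := by
      have h := Finset.sum_mul_sq_le_sq_mul_sq (range n)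
        (fun k => Real.sqrt (1 / c (p k) (p (k+1))))
        (fun k => Real.sqrt (c (p k) (p (k+1))) * |u (p k) - u (p (k+1))|)
      have e1 : ∀ k ∈ range n,
          Real.sqrt (1 / c (p k) (p (k+1))) *
            (Real.sqrt (c (p k) (p (k+1))) * |u (p k) - u (p (k+1))|)
          = |u (p (k+1)) - u (p k)| := by
        intro k hk
        have hc := hpos k (mem_range.mp hk)
        rw [← mul_assoc, ← Real.sqrt_mul (one_div_nonneg.mpr hc.le), one_div,
          inv_mul_cancel₀ (ne_of_gt hc), Real.sqrt_one, one_mul, abs_sub_comm]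
      have e2 : ∀ k ∈ range n,
          (Real.sqrt (1 / c (p k) (p (k+1))))^2 = 1 / c (p k) (p (k+1)) := by
        intro k hk
        exact Real.sq_sqrt (one_div_nonneg.mpr (hpos k (mem_range.mp hk)).le)
      have e3 : ∀ k ∈ range n,
          (Real.sqrt (c (p k) (p (k+1))) * |u (p k) - u (p (k+1))|)^2
          = c (p k) (p (k+1)) * (u (p k) - u (p (k+1)))^2 := by
        intro k hk
        rw [mul_pow, Real.sq_sqrt (hpos k (mem_range.mp hk)).le, sq_abs]
      rw [Finset.sum_congr rfl e1, Finset.sum_congr rfl e2, Finset.sum_congr rfl e3] at h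
      exact h
    have hsum : ∑ k ∈ range n, |u (p (k+1)) - u (p k)| ≤ Real.sqrt A * Real.sqrt B := by
      have h := Real.sqrt_le_sqrt hcs
      rwa [Real.sqrt_sq (Finset.sum_nonneg fun k _ => abs_nonneg _),
        Real.sqrt_mul hA0] at h
    calc |u (p n) - u (p 0)| ≤ ∑ k ∈ range n, |u (p (k+1)) - u (p k)| := habs
      _ ≤ Real.sqrt A * Real.sqrt B := hsum
      _ ≤ Real.sqrt A * Real.sqrt E :=
          mul_le_mul_of_nonneg_left (Real.sqrt_le_sqrt hstep) (Real.sqrt_nonneg _)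
  · -- loop erasure
    push_neg at hinj
    obtain ⟨i, hi, j, hj, hpij, hij⟩ := hinj
    obtain ⟨a, b, hab, hbn, hpab⟩ : ∃ a b, a < b ∧ b ≤ n ∧ p a = p b := by
      rcases lt_or_gt_of_ne hij with h | h
      · exact ⟨i, j, h, hj, hpij⟩
      · exact ⟨j, i, h, hi, hpij.symm⟩
    set d := b - a with hd
    set m := n - d with hm
    have hd0 : 0 < d := Nat.sub_pos_of_lt hab
    have hdn : d ≤ n := le_trans (Nat.sub_le _ _) hbn
    have hmd : m + d = n := Nat.sub_add_cancel hdn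
    have hmn : m < n := by omega
    have hadb : a + d = b := by omega
    have ham : a ≤ m := by omega
    set q : ℕ → V := fun k => if k ≤ a then p k else p (k + d) with hq
    set σ : ℕ → ℕ := fun k => if k < a then k else k + d with hσ
    have hkey : ∀ k < m, q k = p (σ k) ∧ q (k+1) = p (σ k + 1) := by
      intro k hk
      by_cases hka : k < a
      · have h1 : k ≤ a := le_of_lt hka
        have h2 : k + 1 ≤ a := hka
        constructor
        · simp [hq, hσ, h1, hka]
        · simp [hq, hσ, h2, hka]
      · push_neg at hka
        have h2 : ¬ (k + 1 ≤ a) := by omega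
        constructor
        · by_cases hka' : k ≤ a
          · have hka'' : k = a := le_antisymm hka' hka
            subst hka''
            simp only [hq, hσ, if_pos le_rfl, if_neg (lt_irrefl k)]
            rw [hpab, hadb]
          · simp only [hq, hσ, if_neg hka', if_neg (Nat.not_lt.mpr hka)]
        · simp only [hq, hσ, if_neg h2, if_neg (Nat.not_lt.mpr hka)]
          congr 1
          omega
    have hσlt : ∀ k < m, σ k < n := by
      intro k hk
      by_cases h : k < a <;> simp only [hσ, if_pos, if_neg, h, if_true, if_false] <;> omega
    have hqpos : ∀ k < m, 0 < c (q k) (q (k+1)) := by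
      intro k hk
      obtain ⟨h1, h2⟩ := hkey k hk
      rw [h1, h2]
      exact hpos _ (hσlt k hk)
    have hq0 : q 0 = p 0 := by simp [hq]
    have hqm : q m = p n := by
      by_cases h : m ≤ a
      · have hma : m = a := le_antisymm h ham
        have hbn' : b = n := by omega
        simp only [hq, if_pos h]
        rw [hma, hpab, hbn']
      · simp only [hq, if_neg h, hmd]
    have hIH := IH m hmn q hqpos
    rw [hq0, hqm] at hIH
    refine hIH.trans ?_
    refine mul_le_mul_of_nonneg_right (Real.sqrt_le_sqrt ?_) (Real.sqrt_nonneg _)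
    have hσinj : ∀ x ∈ range m, ∀ y ∈ range m, σ x = σ y → x = y := by
      intro x _ y _ hxy
      simp only [hσ] at hxy
      split_ifs at hxy <;> omega
    have hrw : ∑ k ∈ range m, 1 / c (q k) (q (k+1))
        = ∑ l ∈ (range m).image σ, 1 / c (p l) (p (l+1)) := by
      rw [Finset.sum_image hσinj]
      apply Finset.sum_congr rfl
      intro k hk
      obtain ⟨h1, h2⟩ := hkey k (mem_range.mp hk)
      rw [h1, h2]
    rw [hrw]
    apply Finset.sum_le_sum_of_subset_of_nonneg
    · intro l hl
      rw [mem_image] at hl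
      obtain ⟨k, hk, rfl⟩ := hl
      exact mem_range.mpr (hσlt k (mem_range.mp hk))
    · intro l _ _
      exact one_div_nonneg.mpr (hnonneg _ _)

/-- The evaluation functional u ↦ u(x) − u(o) is bounded in energy norm, with
constant k = (Σ 1/c along a path from o to x)^{1/2}. -/
theorem evaluation_bounded {V : Type*} (c : V → V → ℝ)
    (hsymm : ∀ x y, c x y = c y x) (hnonneg : ∀ x y, 0 ≤ c x y)
    (o x : V) (u : V → ℝ)
    (hfin : Summable (fun p : V × V => c p.1 p.2 * (u p.1 - u p.2) ^ 2))
    (n : ℕ) (p : Fin (n + 1) → V) (h0 : p 0 = o) (hn : p (Fin.last n) = x)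
    (hpos : ∀ i : Fin n, 0 < c (p i.castSucc) (p i.succ)) :
    |u x - u o| ≤ Real.sqrt (∑ i : Fin n, 1 / c (p i.castSucc) (p i.succ)) *
      Real.sqrt ((1/2) * ∑' q : V × V, c q.1 q.2 * (u q.1 - u q.2) ^ 2) := by
  classical
  set p' : ℕ → V := fun k => if h : k < n + 1 then p ⟨k, h⟩ else x with hp'
  have e1 : ∀ i : Fin n, p' i.val = p i.castSucc := by
    intro i
    simp only [hp', dif_pos (Nat.lt_succ_of_lt i.isLt)]
    exact congrArg p (Fin.ext rfl)
  have e2 : ∀ i : Fin n, p' (i.val + 1) = p i.succ := by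
    intro i
    simp only [hp', dif_pos (Nat.succ_lt_succ i.isLt)]
    exact congrArg p (Fin.ext rfl)
  have hpos' : ∀ k < n, 0 < c (p' k) (p' (k+1)) := by
    intro k hk
    have := hpos ⟨k, hk⟩
    rwa [← e1 ⟨k, hk⟩, ← e2 ⟨k, hk⟩] at this
  have h := eval_helper c hsymm hnonneg u hfin n p' hpos'
  have hpn : p' n = x := by
    simp only [hp', dif_pos (Nat.lt_succ_self n)]
    rw [← hn]
    exact congrArg p (Fin.ext rfl)
  have hp0 : p' 0 = o := by
    simp only [hp', dif_pos (Nat.succ_pos n)]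
    rw [← h0]
    exact congrArg p (Fin.ext rfl)
  rw [hpn, hp0] at h
  refine h.trans ?_
  refine mul_le_mul_of_nonneg_right (Real.sqrt_le_sqrt (le_of_eq ?_)) (Real.sqrt_nonneg _)
  rw [← Fin.sum_univ_eq_sum_range (fun k => 1 / c (p' k) (p' (k+1))) n]
  apply Finset.sum_congr rfl
  intro i _
  rw [e1 i, e2 i]
end

section
/- The energy kernel elements are dipoles: for any vertex x, the pointwise identity Δv_x = δ_x - δ_o holds. -/
noncomputable def energyForm {V : Type*} (c : V → V → ℝ) (u v : V → ℝ) : ℝ :=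
  (1/2) * ∑' p : V × V, c p.1 p.2 * (u p.1 - u p.2) * (v p.1 - v p.2)

def FinEnergy {V : Type*} (c : V → V → ℝ) (u : V → ℝ) : Prop :=
  Summable (fun p : V × V => c p.1 p.2 * (u p.1 - u p.2) * (u p.1 - u p.2))

set_option maxHeartbeats 1000000 in
/-- The energy kernel elements are dipoles: Δv_x = δ_x − δ_o pointwise. -/
theorem energy_kernel_dipole {V : Type*} [DecidableEq V] (c : V → V → ℝ)
    (hsymm : ∀ x y, c x y = c y x) (hnonneg : ∀ x y, 0 ≤ c x y)
    (hloop : ∀ z, c z z = 0) (hrow : ∀ z, Summable (c z))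
    (o : V) (v : V → V → ℝ)
    (hfinv : ∀ z, FinEnergy c (v z))
    (hrep : ∀ (z : V) (u : V → ℝ), FinEnergy c u → energyForm c (v z) u = u z - u o)
    (x : V) :
    ∀ y : V, (∑' z, c y z * (v x y - v x z))
      = (if y = x then (1:ℝ) else 0) - (if y = o then (1:ℝ) else 0) := by
  intro y
  set f : V → ℝ := v x with hf
  set δ : V → ℝ := fun w => if w = y then (1:ℝ) else 0 with hδ
  have hil : Function.Injective (fun z : V => ((y, z) : V × V)) := by
    intro a b h; simpa using h
  have hir : Function.Injective (fun z : V => ((z, y) : V × V)) := by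
    intro a b h; simpa using h
  -- slice summability of the energy of f on row y
  have hslice : Summable (fun z => c y z * (f y - f z) * (f y - f z)) :=
    (hfinv x).comp_injective hil
  -- summability of the Laplacian row
  have hS : Summable (fun z => c y z * (f y - f z)) := by
    apply Summable.of_abs
    refine Summable.of_nonneg_of_le (fun z => abs_nonneg _) (fun z => ?_)
      (((hrow y).add hslice).mul_left (1/2))
    have h1 := hnonneg y z
    rw [abs_mul, abs_of_nonneg h1]
    nlinarith [sq_nonneg (|f y - f z| - 1), sq_abs (f y - f z),
      mul_nonneg h1 (abs_nonneg (f y - f z))]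
  -- summability of indicator-row helpers
  have hg1 : Summable (fun p : V × V => if p.1 = y then c p.1 p.2 else 0) := by
    rw [← hil.summable_iff (f := fun p : V × V => if p.1 = y then c p.1 p.2 else 0)]
    · simpa [Function.comp_def] using hrow y
    · rintro ⟨a, b⟩ hp
      have : a ≠ y := by
        intro h; exact hp ⟨b, by simp [h]⟩
      simp [this]
  have hg2 : Summable (fun p : V × V => if p.2 = y then c p.1 p.2 else 0) := by
    rw [← hir.summable_iff (f := fun p : V × V => if p.2 = y then c p.1 p.2 else 0)]
    · have : (fun z : V => c z y) = c y := by
        funext z; exact hsymm z y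
      simpa [Function.comp_def, this] using hrow y
    · rintro ⟨a, b⟩ hp
      have : b ≠ y := by
        intro h; exact hp ⟨a, by simp [h]⟩
      simp [this]
  -- δ has finite energy
  have hfinδ : FinEnergy c δ := by
    unfold FinEnergy
    refine Summable.of_nonneg_of_le (fun p => ?_) (fun p => ?_) (hg1.add hg2)
    · have h0 : c p.1 p.2 * (δ p.1 - δ p.2) * (δ p.1 - δ p.2)
          = c p.1 p.2 * ((δ p.1 - δ p.2) * (δ p.1 - δ p.2)) := by ring
      rw [h0]
      exact mul_nonneg (hnonneg p.1 p.2) (mul_self_nonneg _)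
    · have hc := hnonneg p.1 p.2
      by_cases h1 : p.1 = y <;> by_cases h2 : p.2 = y <;>
        simp [hδ, h1, h2, hc, hloop]
  -- the two summands of the energy form
  set A : V × V → ℝ := fun p => c p.1 p.2 * (f p.1 - f p.2) * δ p.1 with hA
  set B : V × V → ℝ := fun p => c p.1 p.2 * (f p.1 - f p.2) * δ p.2 with hB
  have hAsupp : ∀ p : V × V, p ∉ Set.range (fun z : V => ((y, z) : V × V)) → A p = 0 := by
    rintro ⟨a, b⟩ hp
    have : a ≠ y := by intro h; exact hp ⟨b, by simp [h]⟩
    simp [hA, hδ, this]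
  have hBsupp : ∀ p : V × V, p ∉ Set.range (fun z : V => ((z, y) : V × V)) → B p = 0 := by
    rintro ⟨a, b⟩ hp
    have : b ≠ y := by intro h; exact hp ⟨a, by simp [h]⟩
    simp [hB, hδ, this]
  have hAcomp : (fun z => A (y, z)) = fun z => c y z * (f y - f z) := by
    funext z; simp [hA, hδ]
  have hBcomp : (fun z => B (z, y)) = fun z => -(c y z * (f y - f z)) := by
    funext z; simp [hB, hδ, hsymm z y]; ring
  have hAsum : Summable A := by
    rw [← hil.summable_iff hAsupp]
    simpa [Function.comp_def, hAcomp] using hS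
  have hBsum : Summable B := by
    rw [← hir.summable_iff hBsupp]
    simpa [Function.comp_def, hBcomp] using hS.neg
  have hAtsum : ∑' p, A p = ∑' z, c y z * (f y - f z) := by
    rw [← hil.tsum_eq (fun p hp => by by_contra h; exact hp (hAsupp p h))]
    simp [hAcomp]
  have hBtsum : ∑' p, B p = -∑' z, c y z * (f y - f z) := by
    rw [← hir.tsum_eq (fun p hp => by by_contra h; exact hp (hBsupp p h))]
    rw [show (fun z => B (z, y)) = fun z => -(c y z * (f y - f z)) from hBcomp]
    exact tsum_neg
  -- compute the energy form
  have hEF : energyForm c f δ = ∑' z, c y z * (f y - f z) := by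
    unfold energyForm
    have : (fun p : V × V => c p.1 p.2 * (f p.1 - f p.2) * (δ p.1 - δ p.2))
        = fun p => A p - B p := by
      funext p; simp [hA, hB]; ring
    rw [this, Summable.tsum_sub hAsum hBsum, hAtsum, hBtsum]
    ring
  have hkey := hrep x δ hfinδ
  rw [hEF] at hkey
  rw [hkey, hδ]
  simp only []
  congr 1 <;> simp [eq_comm]
end

section
/- Royden decomposition: the energy Hilbert space decomposes orthogonally as H_E = Fin ⊕ Harm, where Fin is the E-closure of the span of Dirac masses and Harm is the space of harmonic functions of finite energy. In particular, a finite-energy function u is harmonic if and only if ⟨δ_x, u⟩_E = 0 for every vertex x. -/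
/-- Royden decomposition: H_E = Fin ⊕ Harm (orthogonally), where Fin is the closure
of the span of the Dirac masses and Harm consists of the harmonic elements; and
u is harmonic iff ⟨δ_x, u⟩ = 0 for all x. -/
theorem royden_decomposition {V : Type*} {H : Type*} [NormedAddCommGroup H]
    [InnerProductSpace ℝ H] [CompleteSpace H]
    (δ : V → H) (Δ : H → V → ℝ)
    (hrep : ∀ (x : V) (u : H), inner ℝ (δ x) u = Δ u x) :
    (∀ u : H, ∃ f h : H,
        f ∈ (Submodule.span ℝ (Set.range δ)).topologicalClosure
        ∧ (∀ x, Δ h x = 0) ∧ u = f + h)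
    ∧ (∀ f h : H, f ∈ (Submodule.span ℝ (Set.range δ)).topologicalClosure →
        (∀ x, Δ h x = 0) → inner ℝ f h = (0:ℝ))
    ∧ (∀ u : H, (∀ x, Δ u x = 0) ↔ ∀ x, inner ℝ (δ x) u = (0:ℝ)) := by
  set K := (Submodule.span ℝ (Set.range δ)).topologicalClosure with hKdef
  -- harmonic iff inner-zero
  have hiff : ∀ u : H, (∀ x, Δ u x = 0) ↔ ∀ x, inner ℝ (δ x) u = (0:ℝ) := by
    intro u
    constructor
    · intro hu x; rw [hrep]; exact hu x
    · intro hu x; rw [← hrep]; exact hu x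
  -- orthogonality
  have horth : ∀ f h : H, f ∈ K → (∀ x, Δ h x = 0) → inner ℝ f h = (0:ℝ) := by
    intro f h hf hh
    have hh' : ∀ x, inner ℝ (δ x) h = (0:ℝ) := (hiff h).1 hh
    have hle : Submodule.span ℝ (Set.range δ) ≤ LinearMap.ker ((innerSL ℝ h : H →L[ℝ] ℝ) : H →ₗ[ℝ] ℝ) := by
      rw [Submodule.span_le]
      rintro _ ⟨x, rfl⟩
      simp only [SetLike.mem_coe, LinearMap.mem_ker, ContinuousLinearMap.coe_coe, innerSL_apply_apply]
      rw [real_inner_comm]; exact hh' x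
    have hcl : K ≤ LinearMap.ker ((innerSL ℝ h : H →L[ℝ] ℝ) : H →ₗ[ℝ] ℝ) :=
      Submodule.topologicalClosure_minimal _ hle (ContinuousLinearMap.isClosed_ker (innerSL ℝ h))
    have := hcl hf
    simp only [LinearMap.mem_ker, ContinuousLinearMap.coe_coe, innerSL_apply_apply] at this
    rw [real_inner_comm]; exact this
  refine ⟨?_, horth, hiff⟩
  intro u
  haveI : CompleteSpace K :=
    (Submodule.span ℝ (Set.range δ)).isClosed_topologicalClosure.completeSpace_coe
  refine ⟨K.orthogonalProjection u, u - K.orthogonalProjection u,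
    (K.orthogonalProjection u).2, ?_, by abel⟩
  have hmem : (u - K.orthogonalProjection u) ∈ Kᗮ :=
    K.sub_starProjection_mem_orthogonal u
  intro x
  rw [← hrep]
  exact (Submodule.mem_orthogonal K _).1 hmem (δ x)
    ((Submodule.span ℝ (Set.range δ)).le_topologicalClosure
      (Submodule.subset_span ⟨x, rfl⟩))
end

section
/- For any vertex x of finite degree, the Dirac mass can be expressed in terms of the energy kernel: δ_x = c(x)·v_x − Σ_{y~x} c_{xy}·v_y as elements of H_E. -/
/-- For a vertex of finite degree, δ_x = c(x)·v_x − Σ_{y~x} c_{xy} v_y in H_E,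
i.e., pointwise up to an additive constant. -/
theorem dirac_in_terms_of_energy_kernel {V : Type*} [DecidableEq V] (c : V → V → ℝ)
    (hsymm : ∀ x y, c x y = c y x) (hnonneg : ∀ x y, 0 ≤ c x y)
    (hloop : ∀ z, c z z = 0)
    (o x : V) (v : V → V → ℝ)
    (hfinv : ∀ z, FinEnergy c (v z))
    (hrep : ∀ (z : V) (u : V → ℝ), FinEnergy c u → energyForm c (v z) u = u z - u o)
    (N : Finset V) (hN : ∀ y, y ∈ N ↔ 0 < c x y) :
    ∃ k : ℝ, ∀ z : V, (if z = x then (1:ℝ) else 0)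
      = (∑ y ∈ N, c x y) * v x z - (∑ y ∈ N, c x y * v y z) + k := by
  classical
  set δ : V → ℝ := fun z => if z = x then (1:ℝ) else 0 with hδ
  have hxN : x ∉ N := by simp [hN, hloop]
  have hczero : ∀ y, y ∉ N → c x y = 0 := by
    intro y hy
    have h1 : ¬ 0 < c x y := fun h => hy ((hN y).2 h)
    have h2 := hnonneg x y
    linarith
  set S : Finset (V × V) := ({x} ×ˢ N) ∪ (N ×ˢ {x}) with hS
  have hzero : ∀ p : V × V, p ∉ S → c p.1 p.2 * (δ p.1 - δ p.2) = 0 := by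
    rintro ⟨a, b⟩ hp
    simp only [hS, Finset.mem_union, Finset.mem_product, Finset.mem_singleton,
      not_or, not_and_or] at hp
    by_cases ha : a = x <;> by_cases hb : b = x
    · simp [hδ, ha, hb]
    · rcases hp.1 with h | h
      · exact absurd ha h
      · subst ha; simp [hczero b h]
    · rcases hp.2 with h | h
      · subst hb; rw [hsymm]; simp [hczero a h]
      · exact absurd hb h
    · simp [hδ, ha, hb]
  -- δ has finite energy
  have hfinδ : FinEnergy c δ := by
    apply summable_of_ne_finset_zero (s := S)
    intro p hp
    rw [hzero p hp, zero_mul]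
  -- compute the energy form of v z against δ
  have hcomp : ∀ z : V, energyForm c (v z) δ = ∑ y ∈ N, c x y * (v z x - v z y) := by
    intro z
    have hz2 : ∀ p : V × V, p ∉ S →
        c p.1 p.2 * (v z p.1 - v z p.2) * (δ p.1 - δ p.2) = 0 := by
      intro p hp
      have : c p.1 p.2 * (v z p.1 - v z p.2) * (δ p.1 - δ p.2)
          = (c p.1 p.2 * (δ p.1 - δ p.2)) * (v z p.1 - v z p.2) := by ring
      rw [this, hzero p hp, zero_mul]
    unfold energyForm
    rw [tsum_eq_sum hz2]
    have hdisj : Disjoint (({x} : Finset V) ×ˢ N) (N ×ˢ ({x} : Finset V)) := by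
      rw [Finset.disjoint_left]
      rintro ⟨a, b⟩ hab hab'
      simp only [Finset.mem_product, Finset.mem_singleton] at hab hab'
      rw [hab.1] at hab'
      exact hxN hab'.1
    rw [hS, Finset.sum_union hdisj, Finset.sum_product, Finset.sum_product,
      Finset.sum_singleton]
    have e1 : ∑ y ∈ N, c x y * (v z x - v z y) * (δ x - δ y)
        = ∑ y ∈ N, c x y * (v z x - v z y) := by
      apply Finset.sum_congr rfl
      intro y hy
      have hyx : y ≠ x := fun h => hxN (h ▸ hy)
      simp [hδ, hyx]
    have e2 : ∑ a ∈ N, ∑ b ∈ {x}, c a b * (v z a - v z b) * (δ a - δ b)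
        = ∑ y ∈ N, c x y * (v z x - v z y) := by
      rw [Finset.sum_congr rfl (fun a _ => Finset.sum_singleton _ _)]
      apply Finset.sum_congr rfl
      intro y hy
      have hyx : y ≠ x := fun h => hxN (h ▸ hy)
      simp only [hδ, if_pos rfl, if_neg hyx]
      rw [hsymm y x]; ring
    rw [e1, e2]; ring
  -- the representation property applied to δ
  have key : ∀ z : V, δ z - δ o = ∑ y ∈ N, c x y * (v z x - v z y) := by
    intro z
    rw [← hcomp z]
    exact (hrep z δ hfinδ).symm
  -- symmetry of the energy form
  have hsym_e : ∀ a b : V, energyForm c (v a) (v b) = energyForm c (v b) (v a) := by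
    intro a b
    unfold energyForm
    congr 1
    exact tsum_congr fun p => by ring
  have hvsym : ∀ a b : V, v a b - v a o = v b a - v b o := by
    intro a b
    have h1 := hrep a (v b) (hfinv b)
    have h2 := hrep b (v a) (hfinv a)
    rw [hsym_e b a] at h2
    rw [h1] at h2
    linarith
  -- conclude
  refine ⟨δ o - (∑ y ∈ N, c x y) * v x o + ∑ y ∈ N, c x y * v y o, ?_⟩
  intro z
  have key2 : δ z - δ o
      = (∑ y ∈ N, c x y) * (v x z - v x o) - ∑ y ∈ N, c x y * (v y z - v y o) := by
    rw [key z]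
    have : ∀ y ∈ N, c x y * (v z x - v z y)
        = c x y * ((v x z - v x o) - (v y z - v y o)) := by
      intro y _
      have h1 : v z x - v z o = v x z - v x o := hvsym z x
      have h2 : v z y - v z o = v y z - v y o := hvsym z y
      have : v z x - v z y = (v x z - v x o) - (v y z - v y o) := by linarith
      rw [this]
    rw [Finset.sum_congr rfl this]
    rw [Finset.sum_congr rfl (fun y _ => mul_sub (c x y) _ _), Finset.sum_sub_distrib,
      Finset.sum_mul]
  have h3 : ∑ y ∈ N, c x y * (v y z - v y o)
      = ∑ y ∈ N, c x y * v y z - ∑ y ∈ N, c x y * v y o := by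
    rw [Finset.sum_congr rfl (fun y _ => mul_sub (c x y) _ _), Finset.sum_sub_distrib]
  show δ z = _
  rw [mul_sub] at key2
  rw [h3] at key2
  linarith
end

section
/- A nonconstant harmonic function of finite energy on an infinite network does not belong to ℓ^p(V) for any 1 ≤ p < ∞ (no representative h + k lies in ℓ^p). -/
open Filter

lemma tendsto_finite_ge {f : Type*} {g : f → ℝ} (hb : Filter.Tendsto g Filter.cofinite (nhds 0))
    {ε : ℝ} (hε : 0 < ε) : Set.Finite {x | ε ≤ |g x|} := by
  have := hb (Metric.ball_mem_nhds 0 hε)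
  rw [Filter.mem_map, Filter.mem_cofinite] at this
  apply this.subset
  intro x hx
  simp only [Set.mem_compl_iff, Set.mem_preimage, Metric.mem_ball, Real.dist_eq, sub_zero]
  exact not_lt.mpr hx

lemma key_lemma {V : Type*} (c : V → V → ℝ) (hnonneg : ∀ x y, 0 ≤ c x y)
    (hrow : ∀ x, Summable (c x))
    (hconn : ∀ x y : V, Relation.ReflTransGen (fun a b => 0 < c a b) x y)
    (h : V → ℝ)
    (hharm : ∀ x, ∑' y, c x y * (h x - h y) = 0)
    (a b : V) (hab : h a ≠ h b) (k : ℝ) (ha : -k < h a)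
    (hb : Filter.Tendsto (fun x => h x + k) Filter.cofinite (nhds 0)) : False := by
  -- bound B on |h y + k|
  obtain ⟨B0, hB0⟩ := ((tendsto_finite_ge hb one_pos).image (fun x => |h x + k|)).bddAbove
  set B := max B0 1 with hBdef
  have hB : ∀ y, |h y + k| ≤ B := by
    intro y
    by_cases hy : 1 ≤ |h y + k|
    · exact le_trans (hB0 (Set.mem_image_of_mem _ hy)) (le_max_left _ _)
    · exact le_trans (le_of_not_ge hy) (le_max_right _ _)
  -- finite set F of points with h a ≤ h x
  have hε : 0 < h a + k := by linarith
  have hF : Set.Finite {x | h a ≤ h x} := by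
    apply (tendsto_finite_ge hb hε).subset
    intro x hx
    simp only [Set.mem_setOf_eq] at hx ⊢
    calc h a + k ≤ h x + k := by linarith
    _ ≤ |h x + k| := le_abs_self _
  -- maximum point
  obtain ⟨x0, hx0F, hx0max⟩ := hF.toFinset.exists_max_image h ⟨a, by simp⟩
  have hamem : a ∈ hF.toFinset := by simp
  have hmax : ∀ y, h y ≤ h x0 := by
    intro y
    by_cases hy : h a ≤ h y
    · exact hx0max y (by simpa using hy)
    · exact le_trans (le_of_not_ge hy) (hx0max a hamem)
  -- propagation step
  have step : ∀ x, h x = h x0 → ∀ y, 0 < c x y → h y = h x0 := by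
    intro x hx y hcxy
    set f := fun y => c x y * (h x - h y) with hf
    have hfnn : ∀ y, 0 ≤ f y := fun y =>
      mul_nonneg (hnonneg x y) (sub_nonneg.mpr (hx ▸ hmax y))
    have hfs : Summable f := by
      refine Summable.of_nonneg_of_le hfnn ?_ ((hrow x).mul_right (h x0 + k + B))
      intro y
      apply mul_le_mul_of_nonneg_left _ (hnonneg x y)
      have := abs_le.mp (hB y)
      rw [hx]
      linarith [this.1]
    have hzero : f y = 0 := le_antisymm (by
      calc f y ≤ ∑' z, f z := Summable.le_tsum hfs y (fun j _ => hfnn j)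
      _ = 0 := hharm x) (hfnn y)
    have : h x - h y = 0 := by
      rcases mul_eq_zero.mp hzero with hc | hv
      · exact absurd hc (ne_of_gt hcxy)
      · exact hv
    linarith [hx ▸ this]
  have prop : ∀ y, h y = h x0 := by
    intro y
    induction hconn x0 y with
    | refl => rfl
    | tail _ hcyz ih => exact step _ ih _ hcyz
  exact hab ((prop a).trans (prop b).symm)

/-- A nonconstant finite-energy harmonic function on an infinite network lies in
no ℓ^p(V), 1 ≤ p < ∞: no representative h + k is p-summable. -/
theorem harmonic_not_in_lp {V : Type*} [Infinite V] (c : V → V → ℝ)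
    (hsymm : ∀ x y, c x y = c y x) (hnonneg : ∀ x y, 0 ≤ c x y)
    (hloop : ∀ x, c x x = 0) (hrow : ∀ x, Summable (c x))
    (hconn : ∀ x y : V, Relation.ReflTransGen (fun a b => 0 < c a b) x y)
    (h : V → ℝ) (hfin : FinEnergy c h)
    (hharm : ∀ x, ∑' y, c x y * (h x - h y) = 0)
    (hnc : ∃ a b, h a ≠ h b) :
    ∀ p : ℝ, 1 ≤ p → ∀ k : ℝ, ¬ Summable (fun x => |h x + k| ^ p) := by
  intro p hp k hs
  have hp0 : 0 < p := lt_of_lt_of_le one_pos hp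
  -- from summability, terms tend to 0 along cofinite
  have h1 : Tendsto (fun x => |h x + k| ^ p) cofinite (nhds 0) := hs.tendsto_cofinite_zero
  have h2 : Tendsto (fun x => h x + k) cofinite (nhds 0) := by
    have hc : ContinuousAt (fun s : ℝ => s ^ (1 / p)) 0 :=
      Real.continuousAt_rpow_const 0 (1 / p) (Or.inr (by positivity))
    have h3 : Tendsto (fun x => (|h x + k| ^ p) ^ (1 / p)) cofinite (nhds ((0:ℝ) ^ (1/p))) :=
      (hc.tendsto).comp h1
    rw [Real.zero_rpow (by positivity)] at h3
    have heq : (fun x => (|h x + k| ^ p) ^ (1 / p)) = fun x => |h x + k| := by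
      funext x
      rw [← Real.rpow_mul (abs_nonneg _), mul_one_div, div_self (ne_of_gt hp0),
        Real.rpow_one]
    rw [heq] at h3
    exact tendsto_zero_iff_abs_tendsto_zero _ |>.mpr h3
  obtain ⟨a, b, hab⟩ := hnc
  -- reduce to the case where some point has value ≠ -k, and handle both signs
  rcases lt_trichotomy (h a) (-k) with hlt | heq | hgt
  · -- use -h
    refine key_lemma c hnonneg hrow hconn (fun x => -h x) ?_ a b (by simpa using hab) (-k)
      (by simp; linarith) ?_
    · intro x
      have := hharm x
      calc ∑' y, c x y * (-h x - -h y) = ∑' y, -(c x y * (h x - h y)) := by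
            congr 1; funext y; ring
      _ = 0 := by rw [tsum_neg, this, neg_zero]
    · have : (fun x => -h x + -k) = fun x => -(h x + k) := by funext x; ring
      rw [this]
      simpa using h2.neg
  · -- h a = -k, so h b ≠ -k; redo trichotomy at b
    rcases lt_trichotomy (h b) (-k) with hlt' | heq' | hgt'
    · refine key_lemma c hnonneg hrow hconn (fun x => -h x) ?_ b a
        (by simpa using hab.symm) (-k) (by simp; linarith) ?_
      · intro x
        have := hharm x
        calc ∑' y, c x y * (-h x - -h y) = ∑' y, -(c x y * (h x - h y)) := by
              congr 1; funext y; ring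
        _ = 0 := by rw [tsum_neg, this, neg_zero]
      · have : (fun x => -h x + -k) = fun x => -(h x + k) := by funext x; ring
        rw [this]
        simpa using h2.neg
    · exact hab (heq.trans heq'.symm)
    · exact key_lemma c hnonneg hrow hconn h hharm b a hab.symm k hgt' h2
  · exact key_lemma c hnonneg hrow hconn h hharm a b hab k hgt h2
end

section
/- On the geometric integer network (ℤ, c^n) with c > 1 and r = 1/c, the function w_o(n) = a·r^{|n|} with a = r/(2(1−r)) is a monopole at 0: it has finite energy E(w_o) = r/(2(1−r)) and satisfies Δw_o(0) = 1 and Δw_o(n) = 0 for n ≠ 0. -/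
/-- The conductance of the edge (n−1, n) in the geometric integer network (ℤ, cⁿ). -/
noncomputable def geomCond (c : ℝ) (n : ℤ) : ℝ := c ^ (max n.natAbs (n - 1).natAbs)

/-- On (ℤ, cⁿ) with c > 1 and r = 1/c, the function w(n) = a·r^{|n|} with
a = r/(2(1−r)) is a monopole at 0 of energy r/(2(1−r)). -/
theorem geometric_integers_monopole (c : ℝ) (hc : 1 < c) (r : ℝ) (hr : r = 1 / c)
    (a : ℝ) (ha : a = r / (2 * (1 - r)))
    (w : ℤ → ℝ) (hw : ∀ n : ℤ, w n = a * r ^ n.natAbs) :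
    (∑' n : ℤ, geomCond c n * (w n - w (n - 1)) ^ 2 = r / (2 * (1 - r)))
    ∧ geomCond c 0 * (w 0 - w (-1)) + geomCond c 1 * (w 0 - w 1) = 1
    ∧ ∀ n : ℤ, n ≠ 0 →
        geomCond c n * (w n - w (n - 1)) + geomCond c (n + 1) * (w n - w (n + 1)) = 0 := by
  have hc0 : (0:ℝ) < c := lt_trans one_pos hc
  have hr0 : 0 < r := by rw [hr]; positivity
  have hr1 : r < 1 := by rw [hr]; rw [div_lt_one hc0]; exact hc
  have hcr : c * r = 1 := by rw [hr]; field_simp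
  have hck : ∀ m : ℕ, c ^ m * r ^ m = 1 := by
    intro m; rw [← mul_pow, hcr, one_pow]
  set D : ℝ := a ^ 2 * (1 - r) ^ 2 / r with hD
  have key : ∀ k : ℕ, c ^ (k + 1) * (a * r ^ (k + 1) - a * r ^ k) ^ 2 = D * r ^ k := by
    intro k
    rw [hD, div_mul_eq_mul_div, eq_div_iff hr0.ne']
    linear_combination (a^2*(r-1)^2*r^k*(c*r)) * hck k + (a^2*(r-1)^2*r^k) * hcr
  set f : ℤ → ℝ := fun n => geomCond c n * (w n - w (n - 1)) ^ 2 with hf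
  have hfpos : ∀ n : ℕ, f ((n : ℤ) + 1) = D * r ^ n := by
    intro n
    have e1 : max ((n : ℤ) + 1).natAbs ((n : ℤ) + 1 - 1).natAbs = n + 1 := by omega
    have e2 : ((n : ℤ) + 1).natAbs = n + 1 := by omega
    have e3 : ((n : ℤ) + 1 - 1).natAbs = n := by omega
    simp only [hf, geomCond, hw, e2, e3]
    rw [show max (n+1) n = n+1 from by omega]
    exact key n
  have hfneg : ∀ n : ℕ, f (-((n : ℤ) + 1)) = D * r * r ^ n := by
    intro n
    have e1 : max (-((n : ℤ) + 1)).natAbs (-((n : ℤ) + 1) - 1).natAbs = n + 2 := by omega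
    have e2 : (-((n : ℤ) + 1)).natAbs = n + 1 := by omega
    have e3 : (-((n : ℤ) + 1) - 1).natAbs = n + 2 := by omega
    simp only [hf, geomCond, hw, e2, e3]
    rw [show max (n+1) (n+2) = n+2 from by omega]
    calc c ^ (n + 2) * (a * r ^ (n + 1) - a * r ^ (n + 2)) ^ 2
        = c ^ (n + 1 + 1) * (a * r ^ (n + 1 + 1) - a * r ^ (n + 1)) ^ 2 := by ring
      _ = D * r ^ (n + 1) := key (n + 1)
      _ = D * r * r ^ n := by ring
  have hf0 : f 0 = D := by
    simp only [hf, geomCond, hw]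
    norm_num
    rw [hD, eq_div_iff hr0.ne']
    linear_combination (a^2*(1-r)^2) * hcr
  have hgeo : HasSum (fun n : ℕ => r ^ n) (1 - r)⁻¹ :=
    hasSum_geometric_of_lt_one hr0.le hr1
  have hsum : HasSum f (D * (1 - r)⁻¹ + f 0 + D * r * (1 - r)⁻¹) := by
    apply HasSum.of_add_one_of_neg_add_one
    · have := hgeo.mul_left D
      convert this using 2 with n
      · rfl
      · exact hfpos n
    · have := hgeo.mul_left (D * r)
      convert this using 2 with n
      · rfl
      · exact hfneg n
  have h1r : (1 : ℝ) - r ≠ 0 := by linarith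
  have htsum : ∑' n : ℤ, f n = r / (2 * (1 - r)) := by
    rw [hsum.tsum_eq, hf0, hD, ha]
    field_simp
    ring
  refine ⟨htsum, ?_, ?_⟩
  · have e1 : max (0 : ℤ).natAbs ((0 : ℤ) - 1).natAbs = 1 := by omega
    have e2 : max (1 : ℤ).natAbs ((1 : ℤ) - 1).natAbs = 1 := by omega
    simp only [geomCond, e1, e2, hw, ha]
    have h1 : (0 : ℤ).natAbs = 0 := rfl
    have h2 : (-1 : ℤ).natAbs = 1 := rfl
    have h3 : (1 : ℤ).natAbs = 1 := rfl
    rw [h1, h2, h3]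
    field_simp
    nlinarith [hcr]
  · intro n hn
    rcases lt_or_gt_of_ne hn with h | h
    · obtain ⟨k, rfl⟩ : ∃ k : ℕ, n = -((k : ℤ) + 1) := ⟨(-n - 1).toNat, by omega⟩
      have e1 : max (-((k : ℤ) + 1)).natAbs (-((k : ℤ) + 1) - 1).natAbs = k + 2 := by omega
      have e2 : max (-((k : ℤ) + 1) + 1).natAbs (-((k : ℤ) + 1) + 1 - 1).natAbs = k + 1 := by
        omega
      have e3 : (-((k : ℤ) + 1)).natAbs = k + 1 := by omega
      have e4 : (-((k : ℤ) + 1) - 1).natAbs = k + 2 := by omega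
      have e5 : (-((k : ℤ) + 1) + 1).natAbs = k := by omega
      have e6 : (-((k : ℤ) + 1) + 1 - 1).natAbs = k + 1 := by omega
      simp only [geomCond, hw, e3, e4, e5, e6]
      rw [show max (k+1) (k+2) = k+2 from by omega, show max k (k+1) = k+1 from by omega]
      linear_combination (a*(r-1)*c*(1-c*r)) * hck k + (-(a*(r-1)*c)) * hcr
    · obtain ⟨k, rfl⟩ : ∃ k : ℕ, n = (k : ℤ) + 1 := ⟨(n - 1).toNat, by omega⟩
      have e1 : max ((k : ℤ) + 1).natAbs ((k : ℤ) + 1 - 1).natAbs = k + 1 := by omega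
      have e2 : max ((k : ℤ) + 1 + 1).natAbs ((k : ℤ) + 1 + 1 - 1).natAbs = k + 2 := by omega
      have e3 : ((k : ℤ) + 1).natAbs = k + 1 := by omega
      have e4 : ((k : ℤ) + 1 - 1).natAbs = k := by omega
      have e5 : ((k : ℤ) + 1 + 1).natAbs = k + 2 := by omega
      have e6 : ((k : ℤ) + 1 + 1 - 1).natAbs = k + 1 := by omega
      simp only [geomCond, hw, e3, e4, e5, e6]
      rw [show max (k+1) k = k+1 from by omega, show max (k+2) (k+1) = k+2 from by omega]
      linear_combination (a*(r-1)*c*(1-c*r)) * hck k + (-(a*(r-1)*c)) * hcr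
end

section
/- On the integer network (ℤ, c) with nearest-neighbour conductances c_{n−1,n} > 0, there exists a nonconstant harmonic function of finite energy if and only if Σ_{n∈ℤ} 1/c_{n−1,n} < ∞; moreover the space of such harmonic functions modulo constants is one-dimensional, spanned by the function u with u(n) − u(n−1) = 1/c_{n−1,n}. -/
private lemma flow_const (c : ℤ → ℝ) (u : ℤ → ℝ)
    (h : ∀ n, c n * (u n - u (n - 1)) + c (n + 1) * (u n - u (n + 1)) = 0) :
    ∀ n : ℤ, c n * (u n - u (n - 1)) = c 0 * (u 0 - u (0 - 1)) := by
  have step : ∀ n : ℤ, c (n + 1) * (u (n + 1) - u (n + 1 - 1)) = c n * (u n - u (n - 1)) := by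
    intro n
    have := h n
    have e : n + 1 - 1 = n := by ring
    rw [e]
    nlinarith [this]
  intro n
  induction n using Int.induction_on with
  | zero => rfl
  | succ k ih => rw [step k]; exact ih
  | pred k ih => rw [← ih, ← step (-(k:ℤ) - 1)]; ring_nf

private lemma const_of_zero_incr (u : ℤ → ℝ) (h : ∀ n : ℤ, u n - u (n - 1) = 0) :
    ∀ n : ℤ, u n = u 0 := by
  have step : ∀ n : ℤ, u (n + 1) = u n := by
    intro n
    have := h (n + 1)
    have e : n + 1 - 1 = n := by ring
    rw [e] at this; linarith
  intro n
  induction n using Int.induction_on with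
  | zero => rfl
  | succ k ih => rw [step k]; exact ih
  | pred k ih => rw [← ih, ← step (-(k:ℤ) - 1)]; ring_nf

/-- On (ℤ, c) with nearest-neighbour conductances c(n) > 0 on edges (n−1, n):
a nonconstant finite-energy harmonic function exists iff Σ 1/c(n) < ∞, and all
finite-energy harmonic functions have increments proportional to 1/c(n). -/
theorem integers_harmonic_iff_summable_resistances (c : ℤ → ℝ) (hc : ∀ n, 0 < c n) :
    ((∃ u : ℤ → ℝ,
        (∀ n, c n * (u n - u (n - 1)) + c (n + 1) * (u n - u (n + 1)) = 0)
        ∧ Summable (fun n : ℤ => c n * (u n - u (n - 1)) ^ 2)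
        ∧ ∃ m k, u m ≠ u k)
      ↔ Summable (fun n : ℤ => 1 / c n))
    ∧ ∀ u : ℤ → ℝ,
        (∀ n, c n * (u n - u (n - 1)) + c (n + 1) * (u n - u (n + 1)) = 0) →
        Summable (fun n : ℤ => c n * (u n - u (n - 1)) ^ 2) →
        ∃ a : ℝ, ∀ n, u n - u (n - 1) = a / c n := by
  have hne : ∀ n, c n ≠ 0 := fun n => (hc n).ne'
  -- second conjunct (doesn't even need summability)
  have part2 : ∀ u : ℤ → ℝ,
      (∀ n, c n * (u n - u (n - 1)) + c (n + 1) * (u n - u (n + 1)) = 0) →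
      ∃ a : ℝ, ∀ n, u n - u (n - 1) = a / c n := by
    intro u hu
    refine ⟨c 0 * (u 0 - u (0 - 1)), fun n => ?_⟩
    have := flow_const c u hu n
    rw [eq_div_iff (hne n)]
    linear_combination this
  constructor
  · constructor
    · rintro ⟨u, hu, hsum, m, k, hmk⟩
      obtain ⟨a, ha⟩ := part2 u hu
      have ha0 : a ≠ 0 := by
        intro h0
        apply hmk
        have hz : ∀ n : ℤ, u n - u (n - 1) = 0 := by
          intro n; rw [ha n, h0]; simp
        rw [const_of_zero_incr u hz m, const_of_zero_incr u hz k]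
      have heq : ∀ n : ℤ, c n * (u n - u (n - 1)) ^ 2 = a ^ 2 * (1 / c n) := by
        intro n; rw [ha n]; field_simp [hne n]
      have hsum' : Summable (fun n : ℤ => a ^ 2 * (1 / c n)) := by
        rwa [funext heq] at hsum
      have := hsum'.div_const (a ^ 2)
      have ha2 : a ^ 2 ≠ 0 := pow_ne_zero _ ha0
      simpa [mul_div_assoc, mul_div_cancel_left₀ _ ha2] using this
    · intro hsum
      -- tail sums
      have ht : ∀ n : ℤ, Summable (fun k : ℕ => 1 / c (n + k)) := by
        intro n
        have hinj : Function.Injective (fun k : ℕ => n + (k : ℤ)) := by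
          intro a b hab
          simpa using hab
        exact hsum.comp_injective hinj
      set S : ℤ → ℝ := fun n => ∑' k : ℕ, 1 / c (n + k) with hS
      have hkey : ∀ n : ℤ, S n = 1 / c n + S (n + 1) := by
        intro n
        have h0 := Summable.tsum_eq_zero_add (ht n)
        have h1 : ∀ k : ℕ, 1 / c (n + ((k : ℤ) + 1)) = 1 / c ((n + 1) + k) := by
          intro k; rw [show n + ((k : ℤ) + 1) = (n + 1) + k by ring]
        calc S n = 1 / c (n + (0:ℕ)) + ∑' k : ℕ, 1 / c (n + ((k:ℕ) + 1 : ℕ)) := h0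
          _ = 1 / c n + S (n + 1) := by
              congr 1
              · norm_num
              · refine tsum_congr fun k => ?_
                push_cast
                exact h1 k
      set u : ℤ → ℝ := fun n => -S (n + 1) with hudef
      have hincr : ∀ n : ℤ, u n - u (n - 1) = 1 / c n := by
        intro n
        have e : n - 1 + 1 = n := by ring
        simp only [hudef, e]
        have := hkey n
        linarith
      refine ⟨u, ?_, ?_, ⟨0, -1, ?_⟩⟩
      · intro n
        have h1 := hincr n
        have h2 := hincr (n + 1)
        have e : n + 1 - 1 = n := by ring
        rw [e] at h2
        have hn1 := hne n
        have hn2 := hne (n + 1)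
        field_simp at h1 h2 ⊢
        nlinarith
      · have : (fun n : ℤ => c n * (u n - u (n - 1)) ^ 2) = fun n : ℤ => 1 / c n := by
          funext n
          rw [hincr n]
          field_simp [hne n]
        rwa [this]
      · have := hincr 0
        have : u 0 - u (0 - 1) > 0 := by rw [hincr 0]; exact one_div_pos.mpr (hc 0)
        intro h
        rw [show (0:ℤ) - 1 = -1 by ring] at this
        rw [h] at this
        simp at this
  · intro u hu _
    exact part2 u hu
end
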